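/- Let R^D = ∏_{i<j} (1 − R_{ij}) be the full product of raising-operator factors acting on a sequence c_α = c_{α_1}···c_{α_ℓ} of elements of a commutative ring, where R_{ij} increases α_i by 1 and decreases α_j by 1. Then ∏_{i<j}(1 − R_{ij}) c_α = det(c_{α_i + j − i})_{1≤i,j≤ℓ}. -/

import Mathlib

open Finset AddMonoidAlgebra

namespace Stmt11Aux

/-- The set of pairs `i < j`. -/
def pairs (n : ℕ) : Finset (Fin n × Fin n) :=
  Finset.univ.filter fun p => p.1 < p.2

/-- Indicator vector. -/
def δ {n : ℕ} (i : Fin n) : Fin n → ℤ := fun k => if k = i then 1 else 0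

/-- Exponent vector of the raising operator `R_{ij}`. -/
def e {n : ℕ} (p : Fin n × Fin n) : Fin n → ℤ := δ p.1 - δ p.2

lemma prod_pairs {M : Type*} [CommMonoid M] {n : ℕ} (f : Fin n × Fin n → M) :
    ∏ p ∈ pairs n, f p = ∏ i : Fin n, ∏ j ∈ Finset.Ioi i, f (i, j) := by
  rw [Finset.prod_sigma']
  refine Finset.prod_nbij' (fun x => (⟨x.1, x.2⟩ : Σ _ : Fin n, Fin n))
    (fun x => (x.1, x.2)) ?_ ?_ ?_ ?_ ?_ <;>
    simp [pairs, Finset.mem_sigma]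

lemma sum_pairs {M : Type*} [AddCommMonoid M] {n : ℕ} (f : Fin n × Fin n → M) :
    ∑ p ∈ pairs n, f p = ∑ i : Fin n, ∑ j ∈ Finset.Ioi i, f (i, j) := by
  rw [Finset.sum_sigma']
  refine Finset.sum_nbij' (fun x => (⟨x.1, x.2⟩ : Σ _ : Fin n, Fin n))
    (fun x => (x.1, x.2)) ?_ ?_ ?_ ?_ ?_ <;>
    simp [pairs, Finset.mem_sigma]

lemma sum_e {n : ℕ} (T : Finset (Fin n × Fin n)) (i : Fin n) :
    (∑ p ∈ T, e p) i
      = ((T.filter fun p => p.1 = i).card : ℤ) - ((T.filter fun p => p.2 = i).card : ℤ) := by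
  classical
  have : (∑ p ∈ T, e p) i = ∑ p ∈ T, e p i := by
    simp [Finset.sum_apply]
  rw [this]
  have : ∀ p : Fin n × Fin n, e p i
      = (if p.1 = i then (1:ℤ) else 0) - (if p.2 = i then (1:ℤ) else 0) := by
    intro p; simp [e, δ, Pi.sub_apply, eq_comm]
  simp only [this, Finset.sum_sub_distrib, Finset.sum_boole]

section Key

variable {R : Type*} [CommRing R]

local notation "A" n => AddMonoidAlgebra R (Fin n → ℤ)

lemma key (n : ℕ) :
    (∏ p ∈ pairs n, ((1 : A n) - single (e p) 1))
      = ∑ σ : Equiv.Perm (Fin n),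
          single (fun k => ((σ k : ℕ) : ℤ) - ((k : ℕ) : ℤ)) ((Equiv.Perm.sign σ : ℤ) : R) := by
  classical
  set u : A n := single (fun k => ((k : ℕ) : ℤ)) 1 with hu_def
  have hu : IsUnit u := by
    refine IsUnit.of_mul_eq_one (single (fun k => -((k : ℕ) : ℤ)) 1) ?_
    rw [single_mul_single]
    have h : ((fun k : Fin n => ((k:ℕ):ℤ)) + fun k : Fin n => -((k:ℕ):ℤ)) = (0 : Fin n → ℤ) := by
      funext k; simp
    rw [h, mul_one, AddMonoidAlgebra.one_def]
  apply hu.mul_right_cancel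
  -- X i := single (δ i) 1
  set X : Fin n → A n := fun i => single (δ i) (1 : R) with hX_def
  have hfac : ∀ p ∈ pairs n,
      ((1 : A n) - single (e p) 1) * single (δ p.2) 1 = X p.2 - X p.1 := by
    intro p _
    rw [sub_mul, one_mul, single_mul_single, one_mul]
    have : e p + δ p.2 = δ p.1 := by simp [e]
    rw [this]
  have hu_prod : (∏ p ∈ pairs n, single (δ p.2) (1 : R)) = u := by
    rw [AddMonoidAlgebra.prod_single, Finset.prod_const_one, hu_def]
    congr 1
    funext k
    have : (∑ p ∈ pairs n, δ p.2) k = ∑ p ∈ pairs n, δ p.2 k := by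
      simp [Finset.sum_apply]
    rw [this, sum_pairs (fun p => δ p.2 k)]
    simp only [δ]
    have : ∀ i : Fin n, (∑ j ∈ Finset.Ioi i, if k = j then (1:ℤ) else 0)
        = if i < k then 1 else 0 := by
      intro i
      rw [Finset.sum_ite_eq (Finset.Ioi i) k (fun _ => (1:ℤ))]
      simp [Finset.mem_Ioi]
    rw [Finset.sum_congr rfl fun i _ => this i]
    rw [Finset.sum_boole]
    norm_cast
    rw [← Fin.card_Iio k]
    congr 1
    ext x; simp
  have h1 : (∏ p ∈ pairs n, ((1 : A n) - single (e p) 1)) * u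
      = ∏ p ∈ pairs n, (X p.2 - X p.1) := by
    rw [← hu_prod, ← Finset.prod_mul_distrib]
    exact Finset.prod_congr rfl hfac
  have h3 : (∏ p ∈ pairs n, (X p.2 - X p.1))
      = ∑ σ : Equiv.Perm (Fin n),
          single (fun k => (((σ k : Fin n) : ℕ) : ℤ)) ((Equiv.Perm.sign σ : ℤ) : R) := by
    rw [prod_pairs (fun p => X p.2 - X p.1), ← Matrix.det_vandermonde X,
      Matrix.det_apply']
    have hprod : ∀ σ : Equiv.Perm (Fin n),
        (∏ i, Matrix.vandermonde X (σ i) i)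
          = single (fun k => (((σ.symm k : Fin n) : ℕ) : ℤ)) (1 : R) := by
      intro σ
      have h1 : ∀ i : Fin n, Matrix.vandermonde X (σ i) i
          = single ((i : ℕ) • δ (σ i)) ((1:R) ^ (i:ℕ)) := by
        intro i
        rw [Matrix.vandermonde_apply, hX_def]
        exact AddMonoidAlgebra.single_pow (δ (σ i)) (1:R) (i : ℕ)
      simp only [h1, one_pow]
      rw [AddMonoidAlgebra.prod_single, Finset.prod_const_one]
      congr 1
      funext k
      have : (∑ i : Fin n, (i : ℕ) • δ (σ i)) k = ∑ i : Fin n, (i : ℕ) • δ (σ i) k := by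
        simp [Finset.sum_apply]
      rw [this]
      have : ∀ i : Fin n, (i : ℕ) • δ (σ i) k = if σ.symm k = i then ((i:ℕ):ℤ) else 0 := by
        intro i
        simp only [δ, smul_ite, smul_zero, nsmul_eq_mul, mul_one]
        congr 1
        simp [Equiv.eq_symm_apply, eq_comm]
      rw [Finset.sum_congr rfl fun i _ => this i, Finset.sum_ite_eq]
      simp
    rw [Finset.sum_congr rfl fun σ _ => by rw [hprod σ]]
    have hεmul : ∀ σ : Equiv.Perm (Fin n),
        (((Equiv.Perm.sign σ : ℤ) : A n))
            * single (fun k => (((σ.symm k : Fin n) : ℕ) : ℤ)) (1 : R)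
          = single (fun k => (((σ.symm k : Fin n) : ℕ) : ℤ)) ((Equiv.Perm.sign σ : ℤ) : R) := by
      intro σ
      rw [AddMonoidAlgebra.intCast_def, single_mul_single]
      simp
    rw [Finset.sum_congr rfl fun σ _ => hεmul σ]
    exact Fintype.sum_equiv (Equiv.inv (Equiv.Perm (Fin n))) _ _ (fun σ => by simp [Equiv.Perm.inv_def])
  have h2 : (∑ σ : Equiv.Perm (Fin n),
        single (fun k => ((σ k : ℕ) : ℤ) - ((k : ℕ) : ℤ)) ((Equiv.Perm.sign σ : ℤ) : R)) * u
      = ∑ σ : Equiv.Perm (Fin n),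
          single (fun k => (((σ k : Fin n) : ℕ) : ℤ)) ((Equiv.Perm.sign σ : ℤ) : R) := by
    rw [Finset.sum_mul]
    refine Finset.sum_congr rfl fun σ _ => ?_
    rw [hu_def, single_mul_single, mul_one]
    congr 1
    funext k
    simp
  rw [h1, h3, h2]

end Key

end Stmt11Aux

/-- the raising-operator expansion `∏_{i<j} (1 − R_{ij}) c_α` equals the
Jacobi–Trudi determinant `det(c_{α_i + j − i})`.  Expanding the product, the left side is
the signed sum over subsets `T` of the pairs `i < j`, where the pair `(i,j)` raises the
`i`-th index by `1` and lowers the `j`-th index by `1`. -/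
theorem stmt_11 {R : Type*} [CommRing R] (ℓ : ℕ) (c : ℤ → R)
    (hc0 : c 0 = 1) (hcneg : ∀ r : ℤ, r < 0 → c r = 0)
    (α : Fin ℓ → ℤ) :
    ∑ T ∈ ((Finset.univ : Finset (Fin ℓ × Fin ℓ)).filter fun p => p.1 < p.2).powerset,
      (-1 : R) ^ T.card *
        ∏ i : Fin ℓ,
          c (α i + ((T.filter fun p => p.1 = i).card : ℤ)
              - ((T.filter fun p => p.2 = i).card : ℤ))
      = Matrix.det (Matrix.of fun i j : Fin ℓ => c (α i + (j : ℕ) - (i : ℕ))) := by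
  classical
  open Stmt11Aux in
  -- the linear "evaluation" map
  let v : (Fin ℓ → ℤ) → R := fun a => ∏ i, c (α i + a i)
  let φ := Finsupp.linearCombination R v
  have hkey := congrArg (fun x => φ (AddMonoidAlgebra.coeff x)) (Stmt11Aux.key (R := R) ℓ)
  -- compute φ of the left side
  have hexp : (∏ p ∈ pairs ℓ, ((1 : AddMonoidAlgebra R (Fin ℓ → ℤ)) - AddMonoidAlgebra.single (e p) 1))
      = ∑ T ∈ (pairs ℓ).powerset,
          AddMonoidAlgebra.single (∑ p ∈ T, e p) ((-1 : R) ^ T.card) := by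
    have h1 : ∀ p : Fin ℓ × Fin ℓ, ((1 : AddMonoidAlgebra R (Fin ℓ → ℤ)) - AddMonoidAlgebra.single (e p) 1)
        = AddMonoidAlgebra.single (e p) (-1) + 1 := by
      intro p
      rw [show AddMonoidAlgebra.single (e p) (-1 : R) = -AddMonoidAlgebra.single (e p) 1 from AddMonoidAlgebra.single_neg _ _]
      ring
    rw [Finset.prod_congr rfl fun p _ => h1 p, Finset.prod_add]
    refine Finset.sum_congr rfl fun T hT => ?_
    rw [Finset.prod_const_one, mul_one, AddMonoidAlgebra.prod_single, Finset.prod_const]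
  rw [hexp] at hkey
  simp only [AddMonoidAlgebra.coeff_sum, AddMonoidAlgebra.coeff_single] at hkey
  rw [map_sum, map_sum] at hkey
  simp only [φ, Finsupp.linearCombination_single] at hkey
  have hL : (∑ T ∈ (pairs ℓ).powerset, ((-1:R) ^ T.card) • v (∑ p ∈ T, e p))
      = ∑ T ∈ ((Finset.univ : Finset (Fin ℓ × Fin ℓ)).filter fun p => p.1 < p.2).powerset,
      (-1 : R) ^ T.card *
        ∏ i : Fin ℓ,
          c (α i + ((T.filter fun p => p.1 = i).card : ℤ)
              - ((T.filter fun p => p.2 = i).card : ℤ)) := by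
    refine Finset.sum_congr rfl fun T _ => ?_
    rw [smul_eq_mul]
    congr 1
    refine Finset.prod_congr rfl fun i _ => ?_
    rw [sum_e T i, add_sub_assoc]
  have hR : (∑ σ : Equiv.Perm (Fin ℓ),
        ((Equiv.Perm.sign σ : ℤ) : R) • v (fun k => ((σ k : ℕ) : ℤ) - ((k : ℕ) : ℤ)))
      = Matrix.det (Matrix.of fun i j : Fin ℓ => c (α i + (j : ℕ) - (i : ℕ))) := by
    rw [← Matrix.det_transpose, Matrix.det_apply']
    refine Finset.sum_congr rfl fun σ _ => ?_
    rw [smul_eq_mul]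
    congr 1
    refine Finset.prod_congr rfl fun i _ => ?_
    simp only [v, Matrix.transpose_apply, Matrix.of_apply]
    rw [add_sub_assoc]
  rw [← hL, ← hR]
  exact hkey
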